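/- For a measurable g : ℝ → [0,1] and -1 < q < p, if A > 0 satisfies ∫_{-∞}^{∞} |t|^q g(t) dt = ∫_{-A}^{A} |t|^q dt, then ∫_{|t|≤A} (1-g(t))|t|^p dt ≤ A^{p-q} ∫_{|t|≤A} (1-g(t))|t|^q dt and ∫_{|t|>A} g(t)|t|^p dt ≥ A^{p-q} ∫_{|t|>A} g(t)|t|^q dt; consequently ∫_{|t|≤A}(1-g)|t|^p dt - ∫_{|t|>A} g|t|^p dt ≤ 0. -/

import Mathlib

open MeasureTheory
open scoped ENNReal

theorem cutting_argument
    (g : ℝ → ℝ) (hg : Measurable g) (hg0 : ∀ t, 0 ≤ g t) (hg1 : ∀ t, g t ≤ 1)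
    (q p : ℝ) (hq : -1 < q) (hqp : q < p)
    (A : ℝ) (hA : 0 < A)
    (hAq : ∫⁻ t : ℝ, ENNReal.ofReal (|t| ^ q * g t) =
      ENNReal.ofReal (2 / (q + 1) * A ^ (q + 1))) :
    (∫⁻ t in {t : ℝ | |t| ≤ A}, ENNReal.ofReal ((1 - g t) * |t| ^ p) ≤
        ENNReal.ofReal (A ^ (p - q)) *
          ∫⁻ t in {t : ℝ | |t| ≤ A}, ENNReal.ofReal ((1 - g t) * |t| ^ q)) ∧
    (ENNReal.ofReal (A ^ (p - q)) *
          ∫⁻ t in {t : ℝ | A < |t|}, ENNReal.ofReal (g t * |t| ^ q) ≤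
        ∫⁻ t in {t : ℝ | A < |t|}, ENNReal.ofReal (g t * |t| ^ p)) ∧
    (∫⁻ t in {t : ℝ | |t| ≤ A}, ENNReal.ofReal ((1 - g t) * |t| ^ p) ≤
        ∫⁻ t in {t : ℝ | A < |t|}, ENNReal.ofReal (g t * |t| ^ p)) := by
  have hpq : 0 ≤ p - q := by linarith
  have hApq : (0:ℝ) ≤ A ^ (p - q) := Real.rpow_nonneg hA.le _
  set S : Set ℝ := {t : ℝ | |t| ≤ A} with hSdef
  have hSm : MeasurableSet S := measurableSet_le (measurable_abs) measurable_const
  have hScompl : Sᶜ = {t : ℝ | A < |t|} := by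
    ext t; simp [hSdef, not_le]
  -- measurability of integrands
  have hmq : Measurable fun t : ℝ => ENNReal.ofReal ((1 - g t) * |t| ^ q) :=
    (((measurable_const.sub hg).mul ((by fun_prop : Measurable fun t : ℝ => |t| ^ q))).ennreal_ofReal)
  have hmgq : Measurable fun t : ℝ => ENNReal.ofReal (g t * |t| ^ q) :=
    ((hg.mul ((by fun_prop : Measurable fun t : ℝ => |t| ^ q))).ennreal_ofReal)
  -- Part 1
  have part1 : ∫⁻ t in S, ENNReal.ofReal ((1 - g t) * |t| ^ p) ≤
      ENNReal.ofReal (A ^ (p - q)) * ∫⁻ t in S, ENNReal.ofReal ((1 - g t) * |t| ^ q) := by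
    have step : ∫⁻ t in S, ENNReal.ofReal ((1 - g t) * |t| ^ p) ≤
        ∫⁻ t in S, ENNReal.ofReal (A ^ (p - q) * ((1 - g t) * |t| ^ q)) := by
      apply lintegral_mono_ae
      have h0 : ∀ᵐ t : ℝ ∂(volume.restrict S), t ≠ 0 := by
        apply ae_restrict_of_ae
        rw [ae_iff]
        simp
      filter_upwards [ae_restrict_mem hSm, h0] with t htS ht0
      apply ENNReal.ofReal_le_ofReal
      have habs : 0 < |t| := abs_pos.mpr ht0
      have h1 : (0:ℝ) ≤ 1 - g t := by linarith [hg1 t]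
      have h2 : |t| ^ (p - q) ≤ A ^ (p - q) :=
        Real.rpow_le_rpow (abs_nonneg t) htS hpq
      have h3 : |t| ^ p = |t| ^ (p - q) * |t| ^ q := by
        rw [← Real.rpow_add habs]; ring_nf
      have h4 : (0:ℝ) ≤ |t| ^ q := Real.rpow_nonneg (abs_nonneg t) q
      calc (1 - g t) * |t| ^ p = |t| ^ (p - q) * ((1 - g t) * |t| ^ q) := by
            rw [h3]; ring
        _ ≤ A ^ (p - q) * ((1 - g t) * |t| ^ q) :=
            mul_le_mul_of_nonneg_right h2 (mul_nonneg h1 h4)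
    refine step.trans (le_of_eq ?_)
    rw [← lintegral_const_mul' _ _ ENNReal.ofReal_ne_top]
    congr 1; ext t
    rw [ENNReal.ofReal_mul hApq]
  -- Part 2
  have part2 : ENNReal.ofReal (A ^ (p - q)) *
      ∫⁻ t in Sᶜ, ENNReal.ofReal (g t * |t| ^ q) ≤
      ∫⁻ t in Sᶜ, ENNReal.ofReal (g t * |t| ^ p) := by
    rw [← lintegral_const_mul' _ _ ENNReal.ofReal_ne_top]
    apply lintegral_mono_ae
    filter_upwards [ae_restrict_mem hSm.compl] with t htS
    rw [hScompl] at htS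
    have habs : 0 < |t| := lt_trans hA htS
    rw [← ENNReal.ofReal_mul hApq]
    apply ENNReal.ofReal_le_ofReal
    have h2 : A ^ (p - q) ≤ |t| ^ (p - q) :=
      Real.rpow_le_rpow hA.le htS.le hpq
    have h3 : |t| ^ p = |t| ^ (p - q) * |t| ^ q := by
      rw [← Real.rpow_add habs]; ring_nf
    have h4 : (0:ℝ) ≤ |t| ^ q := Real.rpow_nonneg (abs_nonneg t) q
    calc A ^ (p - q) * (g t * |t| ^ q) ≤ |t| ^ (p - q) * (g t * |t| ^ q) :=
          mul_le_mul_of_nonneg_right h2 (mul_nonneg (hg0 t) h4)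
      _ = g t * |t| ^ p := by rw [h3]; ring
  -- Mass balance: L = J
  have hK : ∫⁻ t in S, ENNReal.ofReal (|t| ^ q) =
      ENNReal.ofReal (2 / (q + 1) * A ^ (q + 1)) := by
    have hq1 : (0:ℝ) < q + 1 := by linarith
    have hSIcc : S = Set.Icc (-A) A := by ext t; simp [hSdef, abs_le]
    have h1 : IntervalIntegrable (fun x : ℝ => |x| ^ q) volume 0 A := by
      apply (intervalIntegral.intervalIntegrable_rpow' hq (a:=0) (b:=A)).congr
      intro x hx; dsimp only
      rw [Set.uIoc_of_le hA.le] at hx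
      rw [abs_of_pos hx.1]
    have h2 : IntervalIntegrable (fun x : ℝ => |x| ^ q) volume (-A) 0 := by
      have := (IntervalIntegrable.iff_comp_neg (f := fun x : ℝ => |x| ^ q)
        (a := 0) (b := A)).mp h1
      simpa using this.symm
    have hint : IntegrableOn (fun x : ℝ => |x| ^ q) (Set.Icc (-A) A) volume := by
      rw [integrableOn_Icc_iff_integrableOn_Ioc, ← intervalIntegrable_iff_integrableOn_Ioc_of_le (by linarith)]
      exact h2.trans h1
    have hval : ∫ t in Set.Icc (-A) A, |t| ^ q = 2 / (q + 1) * A ^ (q + 1) := by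
      have hI : ∫ x in (0:ℝ)..A, |x| ^ q = A ^ (q + 1) / (q + 1) := by
        rw [intervalIntegral.integral_congr (g := fun x : ℝ => x ^ q)
          (fun x hx => by
            rw [Set.uIcc_of_le hA.le] at hx
            simp only []
            rw [abs_of_nonneg hx.1]),
          integral_rpow (Or.inl hq)]
        rw [Real.zero_rpow (by linarith)]
        ring
      have hI2 : ∫ x in (-A)..(0:ℝ), |x| ^ q = A ^ (q + 1) / (q + 1) := by
        have := intervalIntegral.integral_comp_neg (a := 0) (b := A) (fun x : ℝ => |x| ^ q)
        simp only [abs_neg] at this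
        rw [neg_zero] at this
        rw [← this, hI]
      rw [MeasureTheory.integral_Icc_eq_integral_Ioc,
        ← intervalIntegral.integral_of_le (by linarith : -A ≤ A),
        ← intervalIntegral.integral_add_adjacent_intervals h2 h1, hI, hI2]
      field_simp; ring
    rw [hSIcc, ← MeasureTheory.ofReal_integral_eq_lintegral_ofReal hint
      (ae_of_all _ fun t => Real.rpow_nonneg (abs_nonneg t) q), hval]
  have hsplit : (∫⁻ t in S, ENNReal.ofReal ((1 - g t) * |t| ^ q)) +
      (∫⁻ t in S, ENNReal.ofReal (g t * |t| ^ q)) =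
      ∫⁻ t in S, ENNReal.ofReal (|t| ^ q) := by
    rw [← lintegral_add_left hmq]
    congr 1; ext t
    rw [← ENNReal.ofReal_add (mul_nonneg (by linarith [hg1 t]) (Real.rpow_nonneg (abs_nonneg t) q))
      (mul_nonneg (hg0 t) (Real.rpow_nonneg (abs_nonneg t) q))]
    congr 1; ring
  have htotal : (∫⁻ t in S, ENNReal.ofReal (g t * |t| ^ q)) +
      (∫⁻ t in Sᶜ, ENNReal.ofReal (g t * |t| ^ q)) =
      ∫⁻ t in S, ENNReal.ofReal (|t| ^ q) := by
    rw [lintegral_add_compl _ hSm, hK, ← hAq]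
    congr 1; ext t; rw [mul_comm]
  have hIne : (∫⁻ t in S, ENNReal.ofReal (g t * |t| ^ q)) ≠ ⊤ := by
    intro h
    rw [h, top_add, hK] at htotal
    exact ENNReal.ofReal_ne_top htotal.symm
  have hLJ : (∫⁻ t in S, ENNReal.ofReal ((1 - g t) * |t| ^ q)) =
      ∫⁻ t in Sᶜ, ENNReal.ofReal (g t * |t| ^ q) := by
    have := hsplit.trans htotal.symm
    rw [add_comm (∫⁻ t in S, ENNReal.ofReal (g t * |t| ^ q))] at this
    exact WithTop.add_right_cancel hIne this
  refine ⟨part1, by rwa [← hScompl], ?_⟩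
  calc ∫⁻ t in S, ENNReal.ofReal ((1 - g t) * |t| ^ p)
      ≤ ENNReal.ofReal (A ^ (p - q)) * ∫⁻ t in S, ENNReal.ofReal ((1 - g t) * |t| ^ q) := part1
    _ = ENNReal.ofReal (A ^ (p - q)) * ∫⁻ t in Sᶜ, ENNReal.ofReal (g t * |t| ^ q) := by rw [hLJ]
    _ ≤ ∫⁻ t in Sᶜ, ENNReal.ofReal (g t * |t| ^ p) := part2
    _ = ∫⁻ t in {t : ℝ | A < |t|}, ENNReal.ofReal (g t * |t| ^ p) := by rw [hScompl]
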